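/- arXiv:2401.07317 — 3 statements merged into one kernel-verified Lean document; each statement's English description precedes it below -/
import Mathlib

section
/- For all x, y ∈ ℝⁿ and α ∈ ℝ, the limit inner product ⟨x,y⟩_∞ := ⊞_{i∈[n]} x_i y_i satisfies: (i) ⟨x,x⟩_∞ = ‖x‖_∞², i.e. √(⟨x,x⟩_∞) = ‖x‖_∞; (ii) |⟨x,y⟩_∞| ≤ ‖x‖_∞ ‖y‖_∞; (iii) α ⟨x,y⟩_∞ = ⟨αx, y⟩_∞ = ⟨x, αy⟩_∞. -/
open Filter Finset

/-- The binary idempotent operation `⊞`. -/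
noncomputable def bop (a b : ℝ) : ℝ :=
  if |b| < |a| then a else if |a| < |b| then b else (a + b) / 2

/-- The unique real `(2p+1)`-th root of `t`. -/
noncomputable def oddRoot (p : ℕ) (t : ℝ) : ℝ :=
  Real.sign t * |t| ^ ((1 : ℝ) / (2 * (p : ℝ) + 1))

/-- `ξ_I[u](α) = Card{i ∈ I : u i = α} − Card{i ∈ I : u i = −α}`. -/
noncomputable def xiMap {ι : Type*} (I : Finset ι) (u : ι → ℝ) (α : ℝ) : ℤ :=
  ((I.filter fun i => u i = α).card : ℤ) - ((I.filter fun i => u i = -α).card : ℤ)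

/-- The residual index set `J_I(u)`. -/
noncomputable def resid {ι : Type*} (I : Finset ι) (u : ι → ℝ) : Finset ι :=
  I.filter fun i => xiMap I u (u i) ≠ 0

/-- The `n`-ary extension `⊞_{i ∈ I} u i` of the binary operation `⊞`. -/
noncomputable def Fop {ι : Type*} (I : Finset ι) (u : ι → ℝ) : ℝ :=
  if h : (resid I u).Nonempty then
    if 0 < xiMap I u ((resid I u).sup' h fun i => |u i|) then (resid I u).sup' h u
    else if xiMap I u ((resid I u).sup' h fun i => |u i|) < 0 then (resid I u).inf' h u
    else 0
  else 0

/-- The Chebyshev norm `max_{i ∈ [n]} |x i|`. -/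
noncomputable def chebNorm {n : ℕ} (x : Fin n → ℝ) : ℝ := ⨆ i, |x i|

/-- The ultrametric distance `d_⊞(x,y) = max_i |x_i ⊟ y_i|`. -/
noncomputable def dB {n : ℕ} (x y : Fin n → ℝ) : ℝ := ⨆ i, |bop (x i) (-(y i))|

section helpers

variable {ι : Type*}

lemma Fop_eq_zero_or_mem (I : Finset ι) (u : ι → ℝ) :
    Fop I u = 0 ∨ ∃ i ∈ I, Fop I u = u i := by
  unfold Fop
  split_ifs with h1 h2 h3
  · obtain ⟨i, hi, he⟩ := Finset.exists_mem_eq_sup' h1 u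
    exact Or.inr ⟨i, Finset.mem_of_mem_filter i hi, he⟩
  · obtain ⟨i, hi, he⟩ := Finset.exists_mem_eq_inf' h1 u
    exact Or.inr ⟨i, Finset.mem_of_mem_filter i hi, he⟩
  · exact Or.inl rfl
  · exact Or.inl rfl

lemma abs_Fop_le (I : Finset ι) (u : ι → ℝ) {b : ℝ} (hb : 0 ≤ b)
    (h : ∀ i ∈ I, |u i| ≤ b) : |Fop I u| ≤ b := by
  rcases Fop_eq_zero_or_mem I u with h0 | ⟨i, hi, he⟩
  · rw [h0]; simpa using hb
  · rw [he]; exact h i hi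

lemma xiMap_zero (I : Finset ι) (u : ι → ℝ) : xiMap I u 0 = 0 := by
  unfold xiMap
  rw [neg_zero, sub_self]

lemma resid_const_zero (I : Finset ι) : resid I (fun _ => (0 : ℝ)) = ∅ := by
  unfold resid
  rw [Finset.filter_eq_empty_iff]
  intro i _
  simp [xiMap_zero]

lemma Fop_const_zero (I : Finset ι) : Fop I (fun _ => (0 : ℝ)) = 0 := by
  unfold Fop
  rw [dif_neg]
  rw [resid_const_zero]
  exact Finset.not_nonempty_empty

lemma xiMap_neg (I : Finset ι) (u : ι → ℝ) (c : ℝ) :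
    xiMap I u (-c) = - xiMap I u c := by
  unfold xiMap
  rw [neg_neg]
  ring

lemma xiMap_smul (I : Finset ι) (u : ι → ℝ) {α : ℝ} (hα : α ≠ 0) (c : ℝ) :
    xiMap I (fun i => α * u i) (α * c) = xiMap I u c := by
  have h1 : (I.filter fun i => α * u i = α * c) = I.filter fun i => u i = c :=
    Finset.filter_congr fun i _ => mul_right_inj' hα
  have h2 : (I.filter fun i => α * u i = -(α * c)) = I.filter fun i => u i = -c :=
    Finset.filter_congr fun i _ => by
      rw [show -(α * c) = α * (-c) by ring, mul_right_inj' hα]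
  unfold xiMap
  simp only
  rw [h1, h2]

lemma resid_smul (I : Finset ι) (u : ι → ℝ) {α : ℝ} (hα : α ≠ 0) :
    resid I (fun i => α * u i) = resid I u := by
  unfold resid
  exact Finset.filter_congr fun i _ => by rw [xiMap_smul I u hα (u i)]

lemma sup'_mul_nonneg {s : Finset ι} (h : s.Nonempty) (u : ι → ℝ) {α : ℝ} (hα : 0 ≤ α) :
    s.sup' h (fun i => α * u i) = α * s.sup' h u := by
  apply le_antisymm
  · apply Finset.sup'_le
    intro i hi
    exact mul_le_mul_of_nonneg_left (Finset.le_sup' u hi) hα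
  · obtain ⟨i, hi, he⟩ := Finset.exists_mem_eq_sup' h u
    rw [he]
    exact Finset.le_sup' (fun i => α * u i) hi

lemma inf'_mul_nonneg {s : Finset ι} (h : s.Nonempty) (u : ι → ℝ) {α : ℝ} (hα : 0 ≤ α) :
    s.inf' h (fun i => α * u i) = α * s.inf' h u := by
  apply le_antisymm
  · obtain ⟨i, hi, he⟩ := Finset.exists_mem_eq_inf' h u
    rw [he]
    exact Finset.inf'_le (fun i => α * u i) hi
  · apply Finset.le_inf'
    intro i hi
    exact mul_le_mul_of_nonneg_left (Finset.inf'_le u hi) hα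

lemma sup'_mul_nonpos {s : Finset ι} (h : s.Nonempty) (u : ι → ℝ) {α : ℝ} (hα : α ≤ 0) :
    s.sup' h (fun i => α * u i) = α * s.inf' h u := by
  apply le_antisymm
  · apply Finset.sup'_le
    intro i hi
    exact mul_le_mul_of_nonpos_left (Finset.inf'_le u hi) hα
  · obtain ⟨i, hi, he⟩ := Finset.exists_mem_eq_inf' h u
    rw [he]
    exact Finset.le_sup' (fun i => α * u i) hi

lemma inf'_mul_nonpos {s : Finset ι} (h : s.Nonempty) (u : ι → ℝ) {α : ℝ} (hα : α ≤ 0) :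
    s.inf' h (fun i => α * u i) = α * s.sup' h u := by
  apply le_antisymm
  · obtain ⟨i, hi, he⟩ := Finset.exists_mem_eq_sup' h u
    rw [he]
    exact Finset.inf'_le (fun i => α * u i) hi
  · apply Finset.le_inf'
    intro i hi
    exact mul_le_mul_of_nonpos_left (Finset.le_sup' u hi) hα

lemma Fop_smul (I : Finset ι) (u : ι → ℝ) (α : ℝ) :
    Fop I (fun i => α * u i) = α * Fop I u := by
  rcases eq_or_ne α 0 with rfl | hα
  · have h0 : (fun i => (0 : ℝ) * u i) = fun _ => (0 : ℝ) := funext fun i => by ring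
    rw [h0, Fop_const_zero, zero_mul]
  · by_cases h : (resid I u).Nonempty
    · have hr : resid I (fun i => α * u i) = resid I u := resid_smul I u hα
      unfold Fop
      rw [hr, dif_pos h, dif_pos h]
      set M : ℝ := (resid I u).sup' h (fun i => |u i|) with hM
      have habs : ((resid I u).sup' h fun i => |α * u i|) = |α| * M := by
        have he : (fun i => |α * u i|) = fun i => |α| * |u i| := funext fun i => abs_mul _ _
        rw [he, sup'_mul_nonneg h _ (abs_nonneg α), hM]
      rcases lt_trichotomy α 0 with hneg | hzero | hpos
      · have habs' : ((resid I u).sup' h fun i => |α * u i|) = α * (-M) := by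
          rw [habs, abs_of_neg hneg]; ring
        rw [habs', xiMap_smul I u hα (-M), xiMap_neg]
        rcases lt_trichotomy (xiMap I u M) 0 with hx | hx | hx
        · rw [if_pos (by omega), if_neg (by omega), if_pos hx,
            sup'_mul_nonpos h u hneg.le]
        · rw [if_neg (by omega), if_neg (by omega), if_neg (by omega),
            if_neg (by omega), mul_zero]
        · rw [if_neg (by omega), if_pos (by omega), if_pos hx,
            inf'_mul_nonpos h u hneg.le]
      · exact absurd hzero hα
      · have habs' : ((resid I u).sup' h fun i => |α * u i|) = α * M := by
          rw [habs, abs_of_pos hpos]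
        rw [habs', xiMap_smul I u hα M]
        rcases lt_trichotomy (xiMap I u M) 0 with hx | hx | hx
        · rw [if_neg (by omega), if_pos hx, if_neg (by omega), if_pos hx,
            inf'_mul_nonneg h u hpos.le]
        · rw [if_neg (by omega), if_neg (by omega), if_neg (by omega),
            if_neg (by omega), mul_zero]
        · rw [if_pos hx, if_pos hx, sup'_mul_nonneg h u hpos.le]
    · unfold Fop
      rw [resid_smul I u hα, dif_neg h, dif_neg h, mul_zero]

lemma Fop_of_nonneg {I : Finset ι} {u : ι → ℝ} (hI : I.Nonempty)
    (h0 : ∀ i ∈ I, 0 ≤ u i) (hx : ∃ i ∈ I, 0 < u i) :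
    Fop I u = I.sup' hI u := by
  have hxi_pos : ∀ c : ℝ, 0 < c → (∃ i ∈ I, u i = c) → 0 < xiMap I u c := by
    rintro c hc ⟨i, hi, he⟩
    unfold xiMap
    have h1 : (I.filter fun j => u j = -c) = ∅ := by
      rw [Finset.filter_eq_empty_iff]
      intro j hj hje
      have := h0 j hj
      rw [hje] at this
      linarith
    have h2 : (I.filter fun j => u j = c).Nonempty :=
      ⟨i, Finset.mem_filter.mpr ⟨hi, he⟩⟩
    rw [h1]
    simp only [Finset.card_empty, Nat.cast_zero, sub_zero]
    exact_mod_cast Finset.card_pos.mpr h2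
  have hresid : resid I u = I.filter fun i => u i ≠ 0 := by
    unfold resid
    apply Finset.filter_congr
    intro i hi
    constructor
    · intro hne hiz
      rw [hiz, xiMap_zero] at hne
      exact hne rfl
    · intro hne
      have hpos : 0 < u i := lt_of_le_of_ne (h0 i hi) (Ne.symm hne)
      exact ne_of_gt (hxi_pos (u i) hpos ⟨i, hi, rfl⟩)
  obtain ⟨i1, hi1, hpos1⟩ := hx
  have hi1J : i1 ∈ resid I u := by
    rw [hresid]; exact Finset.mem_filter.mpr ⟨hi1, ne_of_gt hpos1⟩
  have hJne : (resid I u).Nonempty := ⟨i1, hi1J⟩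
  have hsub : resid I u ⊆ I := Finset.filter_subset _ _
  have hsupabs : (resid I u).sup' hJne (fun i => |u i|) = (resid I u).sup' hJne u :=
    Finset.sup'_congr hJne rfl fun i hi => abs_of_nonneg (h0 i (hsub hi))
  have hsupJ : (resid I u).sup' hJne u = I.sup' hI u := by
    apply le_antisymm
    · apply Finset.sup'_le
      intro i hi
      exact Finset.le_sup' u (hsub hi)
    · apply Finset.sup'_le
      intro i hi
      by_cases hiz : u i = 0
      · rw [hiz]
        exact le_trans hpos1.le (Finset.le_sup' u hi1J)
      · have hiJ : i ∈ resid I u := by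
          rw [hresid]; exact Finset.mem_filter.mpr ⟨hi, hiz⟩
        exact Finset.le_sup' u hiJ
  have hMpos : 0 < I.sup' hI u := lt_of_lt_of_le hpos1 (Finset.le_sup' u hi1)
  have hMmem : ∃ i ∈ I, u i = I.sup' hI u := by
    obtain ⟨i, hi, he⟩ := Finset.exists_mem_eq_sup' hI u
    exact ⟨i, hi, he.symm⟩
  unfold Fop
  rw [dif_pos hJne, hsupabs, hsupJ, if_pos (hxi_pos _ hMpos hMmem)]

lemma chebNorm_nonneg {n : ℕ} (x : Fin n → ℝ) : 0 ≤ chebNorm x :=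
  Real.iSup_nonneg fun _ => abs_nonneg _

lemma abs_le_chebNorm {n : ℕ} (x : Fin n → ℝ) (i : Fin n) : |x i| ≤ chebNorm x := by
  unfold chebNorm
  exact le_ciSup (Set.Finite.bddAbove (Set.finite_range fun j => |x j|)) i

end helpers

/-- properties of the limit inner product `⟨x,y⟩_∞ = ⊞_i x_i y_i`. -/
theorem stmt3 (n : ℕ) (x y : Fin n → ℝ) (α : ℝ) :
    (Fop Finset.univ (fun i => x i * x i) = chebNorm x ^ 2 ∧
      Real.sqrt (Fop Finset.univ (fun i => x i * x i)) = chebNorm x) ∧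
    |Fop Finset.univ (fun i => x i * y i)| ≤ chebNorm x * chebNorm y ∧
    (α * Fop Finset.univ (fun i => x i * y i)
        = Fop Finset.univ (fun i => (α * x i) * y i) ∧
      α * Fop Finset.univ (fun i => x i * y i)
        = Fop Finset.univ (fun i => x i * (α * y i))) := by
  have hFopx : Fop Finset.univ (fun i => x i * x i) = chebNorm x ^ 2 := by
    by_cases hx : ∃ i, x i ≠ 0
    · obtain ⟨i0, hi0⟩ := hx
      haveI : Nonempty (Fin n) := ⟨i0⟩
      have hne : (Finset.univ : Finset (Fin n)).Nonempty := Finset.univ_nonempty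
      have hcheb : chebNorm x = Finset.univ.sup' hne (fun i => |x i|) :=
        (Finset.sup'_univ_eq_ciSup _).symm
      have h1 : Fop Finset.univ (fun i => x i * x i)
          = Finset.univ.sup' hne (fun i => x i * x i) := by
        apply Fop_of_nonneg hne (fun i _ => mul_self_nonneg _)
        exact ⟨i0, Finset.mem_univ i0, mul_self_pos.mpr hi0⟩
      rw [h1, hcheb]
      apply le_antisymm
      · apply Finset.sup'_le
        intro i _
        have hxle : |x i| ≤ Finset.univ.sup' hne fun j => |x j| :=
          Finset.le_sup' (fun j => |x j|) (Finset.mem_univ i)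
        calc x i * x i = |x i| * |x i| := (abs_mul_abs_self _).symm
          _ ≤ (Finset.univ.sup' hne fun j => |x j|) * (Finset.univ.sup' hne fun j => |x j|) :=
              mul_le_mul hxle hxle (abs_nonneg _) (le_trans (abs_nonneg _) hxle)
          _ = (Finset.univ.sup' hne fun i => |x i|) ^ 2 := (sq _).symm
      · obtain ⟨i, hi, he⟩ := Finset.exists_mem_eq_sup' hne (fun i => |x i|)
        rw [he, sq, abs_mul_abs_self]
        exact Finset.le_sup' (fun j => x j * x j) hi
    · push_neg at hx
      have h1 : (fun i => x i * x i) = fun _ => (0 : ℝ) :=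
        funext fun i => by rw [hx i, mul_zero]
      have h2 : chebNorm x = 0 := by
        apply le_antisymm
        · exact Real.iSup_le (fun i => by rw [hx i]; simp) le_rfl
        · exact chebNorm_nonneg x
      rw [h1, Fop_const_zero, h2]
      ring
  refine ⟨⟨hFopx, ?_⟩, ?_, ?_, ?_⟩
  · rw [hFopx, Real.sqrt_sq (chebNorm_nonneg x)]
  · apply abs_Fop_le
    · exact mul_nonneg (chebNorm_nonneg x) (chebNorm_nonneg y)
    · intro i _
      rw [abs_mul]
      exact mul_le_mul (abs_le_chebNorm x i) (abs_le_chebNorm y i) (abs_nonneg _)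
        (chebNorm_nonneg x)
  · have e1 : (fun i => (α * x i) * y i) = fun i => α * (x i * y i) :=
      funext fun i => by ring
    rw [e1, Fop_smul]
  · have e2 : (fun i => x i * (α * y i)) = fun i => α * (x i * y i) :=
      funext fun i => by ring
    rw [e2, Fop_smul]
end

section
/- For all x, y ∈ ℝⁿ, the sequence p ↦ (Σ_{i∈[n]} (x_i^{2p+1} − y_i^{2p+1})²)^{1/(2(2p+1))} converges as p → ∞ to d_⊞(x,y) := max_{i∈[n]} |x_i ⊟ y_i|. -/
open Filter Finset

lemma lin_atTop (c d : ℝ) (hc : 0 < c) :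
    Tendsto (fun p : ℕ => c * (p : ℝ) + d) atTop atTop :=
  tendsto_atTop_add_const_right _ d ((tendsto_natCast_atTop_atTop).const_mul_atTop hc)

lemma eps_tendsto : Tendsto (fun p : ℕ => (1:ℝ)/(2*(p:ℝ)+1)) atTop (nhds 0) := by
  simpa [one_div, Function.comp_def] using tendsto_inv_atTop_zero.comp (lin_atTop 2 1 (by norm_num))

lemma eps_tendsto' : Tendsto (fun p : ℕ => (1:ℝ)/(2*(2*(p:ℝ)+1))) atTop (nhds 0) := by
  have := tendsto_inv_atTop_zero.comp (lin_atTop 4 2 (by norm_num))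
  refine this.congr fun p => ?_
  simp only [Function.comp_apply, one_div]
  congr 1
  ring

lemma key1 (a b : ℝ) (h : |b| < |a|) :
    Tendsto (fun p : ℕ => |a^(2*p+1) - b^(2*p+1)| ^ ((1:ℝ)/(2*(p:ℝ)+1))) atTop (nhds |a|) := by
  have ha : a ≠ 0 := by
    intro h0; rw [h0, abs_zero] at h; exact absurd h (not_lt.2 (abs_nonneg b))
  have hba : |b/a| < 1 := by
    rw [abs_div, div_lt_one (abs_pos.2 ha)]; exact h
  have hr : Tendsto (fun p : ℕ => (b/a)^(2*p+1)) atTop (nhds 0) := by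
    refine (tendsto_pow_atTop_nhds_zero_of_abs_lt_one hba).comp ?_
    exact tendsto_atTop_mono (fun p => by simp only [id]; omega) tendsto_id
  have hbase : Tendsto (fun p : ℕ => |1 - (b/a)^(2*p+1)|) atTop (nhds 1) := by
    have := ((tendsto_const_nhds (x := (1:ℝ))).sub hr).abs
    simpa using this
  have hmain := (hbase.rpow eps_tendsto (Or.inl one_ne_zero)).const_mul |a|
  rw [mul_comm, Real.rpow_zero, one_mul] at hmain
  refine hmain.congr fun p => ?_
  have h1 : a^(2*p+1) - b^(2*p+1) = a^(2*p+1) * (1 - (b/a)^(2*p+1)) := by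
    rw [div_pow, mul_sub, mul_one, mul_div_assoc', mul_div_right_comm, div_self (pow_ne_zero _ ha), one_mul]
  have hne : (2*(p:ℝ)+1) ≠ 0 := by positivity
  rw [h1, abs_mul, Real.mul_rpow (abs_nonneg _) (abs_nonneg _), abs_pow,
    ← Real.rpow_natCast |a| (2*p+1), ← Real.rpow_mul (abs_nonneg a)]
  push_cast
  rw [mul_one_div, div_self hne, Real.rpow_one]

lemma key (a b : ℝ) :
    Tendsto (fun p : ℕ => |a^(2*p+1) - b^(2*p+1)| ^ ((1:ℝ)/(2*(p:ℝ)+1))) atTop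
      (nhds |bop a (-b)|) := by
  rcases lt_trichotomy |b| |a| with h | h | h
  · have : bop a (-b) = a := by rw [bop, abs_neg, if_pos h]
    rw [this]; exact key1 a b h
  · rcases abs_eq_abs.1 h with h1 | h1 <;> subst h1
    · -- a = b
      have hb : bop b (-b) = 0 := by
        simp [bop, abs_neg, lt_irrefl]
      rw [hb, abs_zero]
      refine tendsto_const_nhds.congr fun p => ?_
      have hne : (1:ℝ)/(2*(p:ℝ)+1) ≠ 0 := by positivity
      rw [sub_self, abs_zero, Real.zero_rpow hne]
    · -- b = -a
      have hb : bop a (-(-a)) = a := by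
        simp [bop, lt_irrefl, add_self_div_two]
      rw [hb]
      have hmain := ((tendsto_const_nhds (x := (2:ℝ))).rpow eps_tendsto
        (Or.inl two_ne_zero)).const_mul |a|
      rw [mul_comm, Real.rpow_zero, one_mul] at hmain
      refine hmain.congr fun p => ?_
      have hodd : Odd (2*p+1) := ⟨p, by ring⟩
      have h1 : a^(2*p+1) - (-a)^(2*p+1) = 2 * a^(2*p+1) := by
        rw [hodd.neg_pow]; ring
      rw [h1, abs_mul, Real.mul_rpow (abs_nonneg _) (abs_nonneg _), abs_pow,
        ← Real.rpow_natCast |a| (2*p+1), ← Real.rpow_mul (abs_nonneg _)]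
      have hne : (2*(p:ℝ)+1) ≠ 0 := by positivity
      push_cast
      rw [mul_one_div, div_self hne, Real.rpow_one, abs_two, mul_comm]
  · have : bop a (-b) = -b := by
      rw [bop, abs_neg, if_neg (not_lt.2 h.le), if_pos h]
    rw [this, abs_neg]
    have := key1 b a h
    refine this.congr fun p => ?_
    rw [abs_sub_comm]

lemma sq_rpow_eq (t : ℝ) (p : ℕ) :
    (t^2) ^ ((1:ℝ)/(2*(2*(p:ℝ)+1))) = |t| ^ ((1:ℝ)/(2*(p:ℝ)+1)) := by
  rw [← sq_abs, ← Real.rpow_natCast |t| 2, ← Real.rpow_mul (abs_nonneg t)]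
  congr 1
  have h : (2*(p:ℝ)+1) ≠ 0 := by positivity
  push_cast
  field_simp

/-- the sequence of generalized distances converges to `d_⊞`. -/
theorem stmt6 (n : ℕ) (x y : Fin n → ℝ) :
    Filter.Tendsto
      (fun p : ℕ =>
        (∑ i, (x i ^ (2 * p + 1) - y i ^ (2 * p + 1)) ^ 2)
          ^ ((1 : ℝ) / (2 * (2 * (p : ℝ) + 1))))
      Filter.atTop (nhds (dB x y)) := by
  rcases Nat.eq_zero_or_pos n with rfl | hn
  · have hd : dB x y = 0 := Real.iSup_of_isEmpty _
    rw [hd]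
    refine tendsto_const_nhds.congr fun p => ?_
    have hne : (1:ℝ)/(2*(2*(p:ℝ)+1)) ≠ 0 := by positivity
    rw [Finset.univ_eq_empty, Finset.sum_empty, Real.zero_rpow hne]
  · haveI : Nonempty (Fin n) := Fin.pos_iff_nonempty.1 hn
    have hne : (univ : Finset (Fin n)).Nonempty := univ_nonempty
    set g : Fin n → ℕ → ℝ :=
      fun i p => |x i^(2*p+1) - y i^(2*p+1)| ^ ((1:ℝ)/(2*(p:ℝ)+1)) with hg
    set L : Fin n → ℝ := fun i => |bop (x i) (-(y i))| with hL
    have hsup : Tendsto (fun p => univ.sup' hne (fun i => g i p)) atTop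
        (nhds (univ.sup' hne L)) :=
      Tendsto.finset_sup'_nhds_apply hne fun i _ => key (x i) (y i)
    have hgnn : ∀ i p, 0 ≤ g i p := fun i p => Real.rpow_nonneg (abs_nonneg _) _
    have hSnn : ∀ p, 0 ≤ univ.sup' hne (fun i => g i p) := fun p =>
      le_trans (hgnn hne.choose p) (Finset.le_sup' (fun i => g i p) (mem_univ hne.choose))
    have hlow : ∀ p : ℕ, univ.sup' hne (fun i => g i p) ≤
        (∑ i, (x i ^ (2*p+1) - y i ^ (2*p+1)) ^ 2) ^ ((1:ℝ)/(2*(2*(p:ℝ)+1))) := by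
      intro p
      refine Finset.sup'_le _ _ fun i _ => ?_
      rw [hg]
      simp only
      rw [← sq_rpow_eq]
      exact Real.rpow_le_rpow (sq_nonneg _)
        (Finset.single_le_sum (f := fun j => (x j ^ (2*p+1) - y j ^ (2*p+1))^2) (fun j _ => sq_nonneg _) (mem_univ i)) (by positivity)
    have hupp : ∀ p : ℕ,
        (∑ i, (x i ^ (2*p+1) - y i ^ (2*p+1)) ^ 2) ^ ((1:ℝ)/(2*(2*(p:ℝ)+1))) ≤
        (n:ℝ) ^ ((1:ℝ)/(2*(2*(p:ℝ)+1))) * univ.sup' hne (fun i => g i p) := by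
      intro p
      set S := univ.sup' hne (fun i => g i p) with hS
      set c : ℝ := 2*(2*(p:ℝ)+1) with hc
      have hcpos : (0:ℝ) < c := by positivity
      have hsum : ∑ i, (x i ^ (2*p+1) - y i ^ (2*p+1)) ^ 2 ≤ (n:ℝ) * S ^ c := by
        calc ∑ i, (x i ^ (2*p+1) - y i ^ (2*p+1)) ^ 2
            ≤ ∑ _i : Fin n, S ^ c := by
              refine Finset.sum_le_sum fun i _ => ?_
              have h1 : (x i ^ (2*p+1) - y i ^ (2*p+1)) ^ 2 = (g i p) ^ c := by
                rw [hg]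
                simp only
                have hne0 : (2*(p:ℝ)+1) ≠ 0 := by positivity
                have hec : ((1:ℝ)/(2*(p:ℝ)+1)) * c = ((2:ℕ):ℝ) := by
                  rw [hc]; push_cast; field_simp
                rw [← Real.rpow_mul (abs_nonneg _), hec, Real.rpow_natCast, sq_abs]
              rw [h1]
              exact Real.rpow_le_rpow (hgnn i p) (Finset.le_sup' (fun j => g j p) (mem_univ i)) hcpos.le
          _ = (n:ℝ) * S ^ c := by
              rw [Finset.sum_const, Finset.card_univ, Fintype.card_fin, nsmul_eq_mul]
      calc (∑ i, (x i ^ (2*p+1) - y i ^ (2*p+1)) ^ 2) ^ ((1:ℝ)/c)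
          ≤ ((n:ℝ) * S ^ c) ^ ((1:ℝ)/c) :=
            Real.rpow_le_rpow (Finset.sum_nonneg fun i _ => sq_nonneg _) hsum (by positivity)
        _ = (n:ℝ) ^ ((1:ℝ)/c) * S := by
            rw [Real.mul_rpow (Nat.cast_nonneg n) (Real.rpow_nonneg (hSnn p) c),
              ← Real.rpow_mul (hSnn p), mul_one_div, div_self hcpos.ne', Real.rpow_one]
    have hup' : Tendsto (fun p : ℕ => (n:ℝ) ^ ((1:ℝ)/(2*(2*(p:ℝ)+1))) *
        univ.sup' hne (fun i => g i p)) atTop (nhds (univ.sup' hne L)) := by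
      have h1 : Tendsto (fun p : ℕ => (n:ℝ) ^ ((1:ℝ)/(2*(2*(p:ℝ)+1)))) atTop (nhds 1) := by
        have := (tendsto_const_nhds (x := (n:ℝ))).rpow eps_tendsto'
          (Or.inl (Nat.cast_ne_zero.2 hn.ne'))
        simpa using this
      simpa using h1.mul hsup
    have hdB : dB x y = univ.sup' hne L := (Finset.sup'_univ_eq_ciSup L).symm
    rw [hdB]
    exact tendsto_of_tendsto_of_tendsto_of_le_of_le hsup hup' hlow hupp
end

section
/- Let x, y ∈ ℝⁿ with x = −y. Then for every z ∈ Co^∞(x,y) with z ≠ x and z ≠ y, one has d_⊞(x,y) = d_⊞(x,z) = d_⊞(z,y). -/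
open Filter Finset

/-- The idempotent symmetric convex hull `Co^∞(x,y)` of two points. -/
noncomputable def coInf {n : ℕ} (x y : Fin n → ℝ) : Set (Fin n → ℝ) :=
  { z | ∃ t r s w : ℝ, 0 ≤ t ∧ 0 ≤ r ∧ 0 ≤ s ∧ 0 ≤ w ∧
      max (max t r) (max s w) = 1 ∧
      z = fun i => Fop (Finset.univ : Finset (Fin 4)) ![t * x i, r * x i, s * y i, w * y i] }

section AuxLemmas
variable {ι : Type*} (I : Finset ι) (u : ι → ℝ)

lemma sup'_const_mul (s : Finset ι) (h : s.Nonempty) (f : ι → ℝ) {a : ℝ} (ha : 0 ≤ a) :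
    s.sup' h (fun i => a * f i) = a * s.sup' h f := by
  apply le_antisymm
  · apply Finset.sup'_le
    intro i hi
    exact mul_le_mul_of_nonneg_left (Finset.le_sup' f hi) ha
  · obtain ⟨i, hi, hEq⟩ := Finset.exists_mem_eq_sup' h f
    rw [hEq]; exact Finset.le_sup' (fun i => a * f i) hi

lemma inf'_const_mul (s : Finset ι) (h : s.Nonempty) (f : ι → ℝ) {a : ℝ} (ha : 0 ≤ a) :
    s.inf' h (fun i => a * f i) = a * s.inf' h f := by
  apply le_antisymm
  · obtain ⟨i, hi, hEq⟩ := Finset.exists_mem_eq_inf' h f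
    rw [hEq]; exact Finset.inf'_le (fun i => a * f i) hi
  · apply Finset.le_inf'
    intro i hi
    exact mul_le_mul_of_nonneg_left (Finset.inf'_le f hi) ha

lemma sup'_neg' (s : Finset ι) (h : s.Nonempty) (f : ι → ℝ) :
    s.sup' h (fun i => -f i) = -(s.inf' h f) := by
  apply le_antisymm
  · apply Finset.sup'_le
    intro i hi
    exact neg_le_neg (Finset.inf'_le f hi)
  · obtain ⟨i, hi, hEq⟩ := Finset.exists_mem_eq_inf' h f
    rw [hEq]; exact Finset.le_sup' (fun i => -f i) hi

lemma inf'_neg' (s : Finset ι) (h : s.Nonempty) (f : ι → ℝ) :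
    s.inf' h (fun i => -f i) = -(s.sup' h f) := by
  apply le_antisymm
  · obtain ⟨i, hi, hEq⟩ := Finset.exists_mem_eq_sup' h f
    rw [hEq]; exact Finset.inf'_le (fun i => -f i) hi
  · apply Finset.le_inf'
    intro i hi
    exact neg_le_neg (Finset.le_sup' f hi)

lemma xiMap_mul {a : ℝ} (ha : a ≠ 0) (α : ℝ) :
    xiMap I (fun i => a * u i) (a * α) = xiMap I u α := by
  unfold xiMap
  have h1 : (I.filter fun i => a * u i = a * α) = I.filter fun i => u i = α :=
    Finset.filter_congr fun i _ => mul_right_inj' ha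
  have h2 : (I.filter fun i => a * u i = -(a * α)) = I.filter fun i => u i = -α :=
    Finset.filter_congr fun i _ => by rw [← mul_neg, mul_right_inj' ha]
  rw [h1, h2]

lemma xiMap_negarg (α : ℝ) : xiMap I u (-α) = -xiMap I u α := by
  unfold xiMap
  rw [neg_neg]
  ring

lemma xiMap_neg_s11 (α : ℝ) : xiMap I (fun i => -u i) α = -xiMap I u α := by
  unfold xiMap
  have h1 : (I.filter fun i => -u i = α) = I.filter fun i => u i = -α :=
    Finset.filter_congr fun i _ => neg_eq_iff_eq_neg
  have h2 : (I.filter fun i => -u i = -α) = I.filter fun i => u i = α :=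
    Finset.filter_congr fun i _ => neg_inj
  rw [h1, h2]; ring

lemma resid_mul {a : ℝ} (ha : a ≠ 0) :
    resid I (fun i => a * u i) = resid I u := by
  unfold resid
  refine Finset.filter_congr fun i _ => ?_
  rw [xiMap_mul I u ha (u i)]

lemma resid_neg : resid I (fun i => -u i) = resid I u := by
  unfold resid
  refine Finset.filter_congr fun i _ => ?_
  rw [xiMap_neg_s11 I u (-u i), xiMap_negarg I u (u i), neg_neg]

lemma Fop_neg : Fop I (fun i => -u i) = -Fop I u := by
  unfold Fop
  simp only [resid_neg I u]
  by_cases hne : (resid I u).Nonempty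
  · rw [dif_pos hne, dif_pos hne]
    have habs : ((resid I u).sup' hne fun i => |-u i|) = (resid I u).sup' hne fun i => |u i| := by
      congr 1; funext i; rw [abs_neg]
    rw [habs, xiMap_neg_s11, sup'_neg', inf'_neg']
    set X := xiMap I u ((resid I u).sup' hne fun i => |u i|) with hX
    rcases lt_trichotomy X 0 with h | h | h
    · rw [if_pos (by omega : (0:ℤ) < -X), if_neg (not_lt.mpr (le_of_lt h)),
        if_pos h]
    · rw [if_neg (by omega : ¬ (0:ℤ) < -X), if_neg (by omega : ¬ -X < 0),
        if_neg (by omega : ¬ (0:ℤ) < X), if_neg (by omega : ¬ X < 0), neg_zero]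
    · rw [if_neg (by omega : ¬ (0:ℤ) < -X), if_pos (by omega : -X < 0), if_pos h]
  · rw [dif_neg hne, dif_neg hne, neg_zero]

lemma Fop_pos_mul {a : ℝ} (ha : 0 < a) :
    Fop I (fun i => a * u i) = a * Fop I u := by
  unfold Fop
  simp only [resid_mul I u (ne_of_gt ha)]
  by_cases hne : (resid I u).Nonempty
  · rw [dif_pos hne, dif_pos hne]
    have habs : ((resid I u).sup' hne fun i => |a * u i|)
        = a * (resid I u).sup' hne fun i => |u i| := by
      have : (fun i => |a * u i|) = fun i => a * |u i| := by
        funext i; rw [abs_mul, abs_of_pos ha]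
      rw [this, sup'_const_mul _ _ _ (le_of_lt ha)]
    rw [habs, xiMap_mul I u (ne_of_gt ha), sup'_const_mul _ _ _ (le_of_lt ha),
      inf'_const_mul _ _ _ (le_of_lt ha)]
    split_ifs <;> ring
  · rw [dif_neg hne, dif_neg hne, mul_zero]

lemma Fop_zero_fun : Fop I (fun _ => (0:ℝ)) = 0 := by
  have h : resid I (fun _ => (0:ℝ)) = ∅ := by
    unfold resid xiMap
    simp
  unfold Fop
  rw [h]
  simp

lemma Fop_mul (a : ℝ) : Fop I (fun i => a * u i) = a * Fop I u := by
  rcases lt_trichotomy a 0 with ha | ha | ha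
  · have h1 : (fun i => a * u i) = fun i => -((-a) * u i) := by funext i; ring
    rw [h1, Fop_neg, Fop_pos_mul I u (by linarith : 0 < -a)]
    ring
  · subst ha
    simp only [zero_mul]
    rw [Fop_zero_fun]
  · exact Fop_pos_mul I u ha

lemma Fop_mem_or_zero : Fop I u = 0 ∨ ∃ i ∈ I, Fop I u = u i := by
  unfold Fop
  by_cases hne : (resid I u).Nonempty
  · rw [dif_pos hne]
    split_ifs
    · right
      obtain ⟨i, hi, hEq⟩ := Finset.exists_mem_eq_sup' hne u
      exact ⟨i, Finset.mem_of_mem_filter i hi, hEq⟩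
    · right
      obtain ⟨i, hi, hEq⟩ := Finset.exists_mem_eq_inf' hne u
      exact ⟨i, Finset.mem_of_mem_filter i hi, hEq⟩
    · exact Or.inl rfl
  · rw [dif_neg hne]; exact Or.inl rfl

lemma bop_self (a : ℝ) : bop a a = a := by
  unfold bop
  simp [add_self_div_two]

lemma bop_right_small {a b : ℝ} (h : |b| < |a|) : bop a b = a := if_pos h

lemma bop_left_small {a b : ℝ} (h : |a| < |b|) : bop a b = b := by
  unfold bop
  rw [if_neg (by exact not_lt.mpr (le_of_lt h)), if_pos h]

end AuxLemmas

/-- if `x = −y`, all interior points of `Co^∞(x,y)` are equidistant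
from `x` and `y`. -/
theorem stmt11 (n : ℕ) (x y : Fin n → ℝ) (hxy : x = -y)
    (z : Fin n → ℝ) (hz : z ∈ coInf x y) (hzx : z ≠ x) (hzy : z ≠ y) :
    dB x y = dB x z ∧ dB x z = dB z y := by
  obtain ⟨t, r, s, w, ht, hr, hs, hw, hmax, hzdef⟩ := hz
  have hy : y = -x := by rw [hxy]; funext i; simp
  set v : Fin 4 → ℝ := ![t, r, -s, -w] with hv
  have hzc : z = fun i => Fop (Finset.univ : Finset (Fin 4)) v * x i := by
    rw [hzdef]; funext i
    have he : ![t * x i, r * x i, s * y i, w * y i] = fun j => x i * v j := by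
      funext j
      fin_cases j <;> simp [hv, hy] <;> ring
    rw [he, Fop_mul]
    ring
  set c : ℝ := Fop (Finset.univ : Finset (Fin 4)) v with hc
  have hb : t ≤ 1 ∧ r ≤ 1 ∧ s ≤ 1 ∧ w ≤ 1 := by
    have h1 : max (max t r) (max s w) ≤ 1 := le_of_eq hmax
    simp only [max_le_iff] at h1
    tauto
  obtain ⟨ht1, hr1, hs1, hw1⟩ := hb
  have hcle : |c| ≤ 1 := by
    rcases Fop_mem_or_zero (Finset.univ : Finset (Fin 4)) v with h0 | ⟨j, _, hj⟩
    · rw [hc, h0]; norm_num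
    · rw [hc, hj]
      fin_cases j <;> simp only [hv] <;>
        [skip; skip; skip; skip] <;>
        · rw [abs_le]
          constructor <;> simp [Matrix.cons_val_zero, Matrix.cons_val_one] <;> linarith
  have hc1 : c ≠ 1 := by
    intro h
    apply hzx
    rw [hzc]
    funext i
    rw [h]
    ring
  have hcm1 : c ≠ -1 := by
    intro h
    apply hzy
    rw [hzc, hy]
    funext i
    rw [h]
    simp
  have hclt : |c| < 1 := by
    rcases lt_or_eq_of_le hcle with h | h
    · exact h
    · exfalso
      rcases abs_eq (by norm_num : (0:ℝ) ≤ 1) |>.mp h with h' | h'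
      · exact hc1 h'
      · exact hcm1 h'
  have key : ∀ i, |bop (x i) (-(y i))| = |x i| ∧ |bop (x i) (-(z i))| = |x i| ∧
      |bop (z i) (-(y i))| = |x i| := by
    intro i
    have hyi : y i = -(x i) := by rw [hy]; simp
    have hzi : z i = c * x i := by rw [hzc]
    rw [hyi, hzi, neg_neg]
    by_cases hx0 : x i = 0
    · simp [hx0, bop_self]
    · have h1 : |c * x i| < |x i| := by
        rw [abs_mul]
        calc |c| * |x i| < 1 * |x i| :=
              mul_lt_mul_of_pos_right hclt (abs_pos.mpr hx0)
          _ = |x i| := one_mul _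
      refine ⟨by rw [bop_self], ?_, ?_⟩
      · rw [bop_right_small (by rwa [abs_neg])]
      · rw [bop_left_small h1]
  have e1 : dB x y = ⨆ i, |x i| := by
    unfold dB; exact iSup_congr fun i => (key i).1
  have e2 : dB x z = ⨆ i, |x i| := by
    unfold dB; exact iSup_congr fun i => (key i).2.1
  have e3 : dB z y = ⨆ i, |x i| := by
    unfold dB; exact iSup_congr fun i => (key i).2.2
  rw [e1, e2, e3]
  exact ⟨rfl, rfl⟩
end
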